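/- Let A be a commutative Noetherian ring and r an ideal of A. Suppose PHI(A, r) holds: for every finite family S of polynomials over A in finitely many variables, if S has a common zero modulo r^q for every q ∈ ℕ, then S has a common zero in A. Then r is contained in the Jacobson radical of A. -/

import Mathlib

/-- The infinitesimal Hasse principle `PHI(A, r)`: every finite polynomial system
over `A` which is solvable modulo `r^q` for all `q` is solvable in `A`. -/
def PHI {A : Type} [CommRing A] (r : Ideal A) : Prop :=
  ∀ (n s : ℕ) (F : Fin s → MvPolynomial (Fin n) A),
    (∀ q : ℕ, ∃ x : Fin n → A, ∀ j, MvPolynomial.eval x (F j) ∈ r ^ q) →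
    ∃ x : Fin n → A, ∀ j, MvPolynomial.eval x (F j) = 0

/-- If `PHI(A, r)` holds then `r` is contained in the Jacobson radical of `A`. -/
theorem stmt_17 {A : Type} [CommRing A] [IsNoetherianRing A]
    (r : Ideal A) (h : PHI r) :
    r ≤ (⊥ : Ideal A).jacobson := by
  intro t ht
  rw [Ideal.mem_jacobson_bot]
  intro y
  set a := t * y with ha
  -- polynomial (a+1) * X - 1
  have hsolv : ∀ q : ℕ, ∃ x : Fin 1 → A, ∀ j : Fin 1,
      MvPolynomial.eval x (MvPolynomial.C (a + 1) * MvPolynomial.X 0 - 1) ∈ r ^ q := by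
    intro q
    refine ⟨fun _ => ∑ i ∈ Finset.range q, (-a) ^ i, fun j => ?_⟩
    simp only [MvPolynomial.eval_sub, MvPolynomial.eval_mul, MvPolynomial.eval_C,
      MvPolynomial.eval_X, map_one]
    have key : (a + 1) * (∑ i ∈ Finset.range q, (-a) ^ i) - 1 = -((-a) ^ q) := by
      have := geom_sum_mul (-a) q
      linear_combination -this
    rw [key]
    have haR : a ∈ r := Ideal.mul_mem_right _ _ ht
    have : (-a) ^ q ∈ r ^ q := Ideal.pow_mem_pow (r.neg_mem haR) q
    exact (r ^ q).neg_mem this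
  obtain ⟨x, hx⟩ := h 1 1
    (fun _ => MvPolynomial.C (a + 1) * MvPolynomial.X 0 - 1) hsolv
  have := hx 0
  simp only [MvPolynomial.eval_sub, MvPolynomial.eval_mul, MvPolynomial.eval_C,
    MvPolynomial.eval_X, map_one, sub_eq_zero] at this
  exact isUnit_iff_exists_inv.mpr ⟨_, this⟩
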